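/- Let (E, Φ) be a regular representation of a Euclidean Jordan algebra J (i.e. there exists ξ⁰ ∈ E with Q(ξ⁰) = e) and c = (c₁,…,c_k) a CSOI. Then each restricted representation (E_j, Φ_j) of J_j is regular: Q_j(ξ⁰_j) = c_j where ξ⁰_j = Φ(c_j)ξ⁰. -/
import Mathlib


open scoped RealInnerProductSpace

/-- A Euclidean Jordan algebra structure on a finite-dimensional real inner
product space: a commutative bilinear product satisfying the Jordan identity,
with unit `one`, such that the inner product is associative. -/
structure EJA (J : Type) [NormedAddCommGroup J] [InnerProductSpace ℝ J] : Type where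
  mul : J →ₗ[ℝ] J →ₗ[ℝ] J
  comm : ∀ x y : J, mul x y = mul y x
  jordan : ∀ x y : J, mul (mul x y) (mul x x) = mul x (mul y (mul x x))
  one : J
  one_mul : ∀ x : J, mul one x = x
  assoc_inner : ∀ x y z : J, ⟪mul x y, z⟫ = ⟪y, mul x z⟫

variable {J : Type} [NormedAddCommGroup J] [InnerProductSpace ℝ J] [FiniteDimensional ℝ J]

/-- The Peirce `μ`-eigenspace of the idempotent `c`. -/
noncomputable def EJA.peirce (A : EJA J) (c : J) (μ : ℝ) : Submodule ℝ J :=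
  Module.End.eigenspace (A.mul c : Module.End ℝ J) μ

/-- A complete system of orthogonal idempotents. -/
def EJA.IsCSOI (A : EJA J) {k : ℕ} (c : Fin k → J) : Prop :=
  (∀ j, A.mul (c j) (c j) = c j) ∧ (∀ i j, i ≠ j → A.mul (c i) (c j) = 0) ∧
    (∑ j, c j) = A.one

/-- `y` is the Jordan inverse of `x`:  `x∘y = e` and `x²∘y = x`. -/
def EJA.IsInv (A : EJA J) (x y : J) : Prop :=
  A.mul x y = A.one ∧ A.mul (A.mul x x) y = x

variable {E : Type} [NormedAddCommGroup E] [InnerProductSpace ℝ E] [FiniteDimensional ℝ E]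

/-- A representation of the Euclidean Jordan algebra `J` on the Euclidean
space `E`: a unital Jordan algebra morphism into symmetric endomorphisms. -/
def EJA.IsRep (A : EJA J) (Φ : J →ₗ[ℝ] E →ₗ[ℝ] E) : Prop :=
  (∀ (x : J) (ξ η : E), ⟪Φ x ξ, η⟫ = ⟪ξ, Φ x η⟫) ∧
  (∀ x y : J, Φ (A.mul x y) = (2 : ℝ)⁻¹ • (Φ x ∘ₗ Φ y + Φ y ∘ₗ Φ x)) ∧
  Φ A.one = LinearMap.id

/-- The subspace `E_j`: the `1`-eigenspace of the projection `Φ(c_j)`. -/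
noncomputable def EJA.repSpace (A : EJA J) (Φ : J →ₗ[ℝ] E →ₗ[ℝ] E)
    {k : ℕ} (c : Fin k → J) (j : Fin k) : Submodule ℝ E :=
  Module.End.eigenspace (Φ (c j) : Module.End ℝ E) 1

/-- If the representation is regular, i.e. `Q(ξ⁰) = e` for some `ξ⁰`, then
each restricted representation is regular: `Q_j(Φ(c_j)ξ⁰) = c_j`. -/
theorem stmt13 (A : EJA J) (Φ : J →ₗ[ℝ] E →ₗ[ℝ] E) (hΦ : A.IsRep Φ)
    (k : ℕ) (c : Fin k → J) (hc : A.IsCSOI c)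
    (Q : E → J) (hQ : ∀ (ξ : E) (x : J), ⟪Q ξ, x⟫ = ⟪Φ x ξ, ξ⟫)
    (Qj : Fin k → E → J)
    (hQj : ∀ (j : Fin k), ∀ ξ ∈ A.repSpace Φ c j,
      Qj j ξ ∈ A.peirce (c j) 1 ∧
        ∀ x ∈ A.peirce (c j) 1, ⟪Qj j ξ, x⟫ = ⟪Φ x ξ, ξ⟫)
    (ξ0 : E) (hreg : Q ξ0 = A.one) :
    ∀ j : Fin k, Qj j (Φ (c j) ξ0) = c j := by
  obtain ⟨hsym, hhom, hone⟩ := hΦ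
  obtain ⟨hidem, horth, hsum⟩ := hc
  intro j
  set p := Φ (c j) with hp
  -- p is a projection
  have hproj : ∀ ξ : E, p (p ξ) = p ξ := by
    intro ξ
    have h := hhom (c j) (c j)
    rw [hidem j] at h
    have h2 := congrArg (fun S => S ξ) h
    simp only [LinearMap.smul_apply, LinearMap.add_apply, LinearMap.comp_apply] at h2
    have : p ξ = (2:ℝ)⁻¹ • (p (p ξ) + p (p ξ)) := h2
    rw [← two_smul ℝ (p (p ξ)), smul_smul] at this
    norm_num at this
    exact this.symm
  -- Φ(c j) ξ0 is in the 1-eigenspace of p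
  have hmem : Φ (c j) ξ0 ∈ A.repSpace Φ c j := by
    rw [EJA.repSpace, Module.End.mem_eigenspace_iff, one_smul]
    exact hproj ξ0
  obtain ⟨hQmem, hQinner⟩ := hQj j (Φ (c j) ξ0) hmem
  -- c j is in the Peirce 1-eigenspace
  have hcmem : c j ∈ A.peirce (c j) 1 := by
    rw [EJA.peirce, Module.End.mem_eigenspace_iff, one_smul]
    exact hidem j
  -- key operator identity for x in the Peirce space
  have key : ∀ x ∈ A.peirce (c j) 1, Φ x ξ0 = p (Φ x (p ξ0)) := by
    intro x hx
    rw [EJA.peirce, Module.End.mem_eigenspace_iff, one_smul] at hx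
    have hT : ∀ ξ : E, Φ x ξ = (2:ℝ)⁻¹ • (p (Φ x ξ) + Φ x (p ξ)) := by
      intro ξ
      have h := hhom (c j) x
      rw [hx] at h
      have h2 := congrArg (fun S => S ξ) h
      simpa using h2
    have h1 : Φ x (p ξ0) = p (Φ x (p ξ0)) := by
      have h := hT (p ξ0)
      rw [hproj ξ0] at h
      have h' : Φ x (p ξ0) = (2:ℝ)⁻¹ • (p (Φ x (p ξ0)) + Φ x (p ξ0)) := h
      linear_combination (norm := module) (2:ℝ) • h'
    have h2 : p (Φ x ξ0) = p (Φ x (p ξ0)) := by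
      have h := congrArg p (hT ξ0)
      rw [map_smul, map_add, hproj] at h
      linear_combination (norm := module) (2:ℝ) • h
    calc Φ x ξ0 = (2:ℝ)⁻¹ • (p (Φ x ξ0) + Φ x (p ξ0)) := hT ξ0
      _ = (2:ℝ)⁻¹ • (p (Φ x (p ξ0)) + p (Φ x (p ξ0))) := by
          linear_combination (norm := module) ((2:ℝ)⁻¹) • h1 + ((2:ℝ)⁻¹) • h2
      _ = p (Φ x (p ξ0)) := by
          rw [← two_smul ℝ, smul_smul]; norm_num
  -- the inner products of Qj and c j agree on the Peirce space
  have hagree : ∀ x ∈ A.peirce (c j) 1, ⟪Qj j (Φ (c j) ξ0), x⟫ = ⟪c j, x⟫ := by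
    intro x hx
    rw [hQinner x hx]
    have hx' : A.mul (c j) x = x := by
      have := hx
      rw [EJA.peirce, Module.End.mem_eigenspace_iff, one_smul] at this
      exact this
    have e1 : ⟪Φ x (p ξ0), p ξ0⟫ = ⟪p (Φ x (p ξ0)), ξ0⟫ := by
      rw [real_inner_comm, hsym (c j), real_inner_comm]
    rw [← hp, e1, ← key x hx, ← hQ ξ0 x, hreg]
    have e2 : ⟪A.one, x⟫ = ⟪A.one, A.mul (c j) x⟫ := by rw [hx']
    rw [e2, ← A.assoc_inner (c j) A.one x, A.comm, A.one_mul]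
  -- conclude by nondegeneracy on the Peirce space
  have hd : Qj j (Φ (c j) ξ0) - c j ∈ A.peirce (c j) 1 :=
    Submodule.sub_mem _ hQmem hcmem
  have : ⟪Qj j (Φ (c j) ξ0) - c j, Qj j (Φ (c j) ξ0) - c j⟫ = (0:ℝ) := by
    rw [inner_sub_left, hagree _ hd]
    ring
  exact sub_eq_zero.mp (inner_self_eq_zero.mp this)
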